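/- Let K be a field and t ∈ K a nonzero element such that t^{2d} ≠ 1 for every integer d ≥ 1, and set q = t^2. Then in the ring of formal power series over K in two variables a and b, Σ_{d₁, d₂ ≥ 0} ((−t)^{d₁² + 2d₁d₂ + 2d₂²} · t^{d₁} / ((q; q)_{d₁} (q; q)_{d₂})) · b^{d₁} a^{d₂} = Σ_{d ≥ 0} ((−1)^d q^{d(d+1)/2} / (q; q)_d) · Π_{i=0}^{d−1} (b − a q^i). -/

import Mathlib

open MvPolynomial Finset

private def Pq {K : Type*} [Field K] (q : K) (m : ℕ) : K :=
  ∏ i ∈ Finset.range m, (1 - q ^ (i + 1))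

private lemma Pq_succ {K : Type*} [Field K] (q : K) (m : ℕ) :
    Pq q (m + 1) = Pq q m * (1 - q ^ (m + 1)) := Finset.prod_range_succ _ _

private def Aco {K : Type*} [Field K] (t : K) (n k : ℕ) : K :=
  (-1 : K) ^ k * t ^ (k * k) * Pq (t ^ 2) n / (t ^ k * Pq (t ^ 2) k * Pq (t ^ 2) (n - k))

private lemma qexpand {K : Type*} [Field K] (t : K) (ht : t ≠ 0)
    (h1 : ∀ i : ℕ, 1 ≤ i → (1 : K) - (t ^ 2) ^ i ≠ 0)
    (hP : ∀ m : ℕ, Pq (t ^ 2) m ≠ 0) :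
    ∀ n : ℕ, (∏ i ∈ Finset.range n,
        ((X 1 : MvPolynomial (Fin 2) K) - C ((t ^ 2) ^ i) * X 0)) =
      ∑ k ∈ Finset.range (n + 1),
        C (Aco t n k) * (X 1 : MvPolynomial (Fin 2) K) ^ (n - k) * (X 0) ^ k := by
  intro n
  induction n with
  | zero => simp [Aco, Pq]
  | succ n ih =>
    have h0 : ∀ m : ℕ, Aco t m 0 = 1 := by
      intro m
      simp only [Aco, pow_zero, one_mul, mul_one, Nat.sub_zero, Nat.zero_mul]
      rw [show Pq (t ^ 2) 0 = 1 from rfl]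
      field_simp [hP m]
    have hlast : Aco t (n + 1) (n + 1) = -((t ^ 2) ^ n * Aco t n n) := by
      simp only [Aco, Nat.sub_self]
      rw [show Pq (t ^ 2) 0 = 1 from rfl]
      field_simp [hP, ht]
      ring
    have hmid : ∀ k, k < n → Aco t (n + 1) (k + 1) = Aco t n (k + 1) - (t ^ 2) ^ n * Aco t n k := by
      intro k hk
      obtain ⟨m, rfl⟩ : ∃ m, n = k + 1 + m := ⟨n - k - 1, by omega⟩
      simp only [Aco]
      rw [show k + 1 + m + 1 - (k + 1) = m + 1 by omega,
          show k + 1 + m - (k + 1) = m by omega,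
          show k + 1 + m - k = m + 1 by omega,
          show Pq (t ^ 2) (k + 1 + m + 1) = Pq (t ^ 2) (k + 1 + m) * (1 - (t^2) ^ (k + 1 + m + 1)) from Pq_succ _ _,
          show Pq (t ^ 2) (k + 1) = Pq (t ^ 2) k * (1 - (t^2) ^ (k + 1)) from Pq_succ _ _,
          show Pq (t ^ 2) (m + 1) = Pq (t ^ 2) m * (1 - (t^2) ^ (m + 1)) from Pq_succ _ _]
      have e1 := h1 (k + 1 + m + 1) (by omega)
      have e2 := h1 (k + 1) (by omega)
      have e3 := h1 (m + 1) (by omega)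
      have hd1 : t ^ (k+1) * (Pq (t^2) k * (1 - (t^2) ^ (k+1))) * (Pq (t^2) m * (1 - (t^2) ^ (m+1))) ≠ 0 :=
        mul_ne_zero (mul_ne_zero (pow_ne_zero _ ht) (mul_ne_zero (hP k) e2)) (mul_ne_zero (hP m) e3)
      have hd2 : t ^ (k+1) * (Pq (t^2) k * (1 - (t^2) ^ (k+1))) * Pq (t^2) m ≠ 0 :=
        mul_ne_zero (mul_ne_zero (pow_ne_zero _ ht) (mul_ne_zero (hP k) e2)) (hP m)
      have hd3 : t ^ k * Pq (t^2) k * (Pq (t^2) m * (1 - (t^2) ^ (m+1))) ≠ 0 :=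
        mul_ne_zero (mul_ne_zero (pow_ne_zero _ ht) (hP k)) (mul_ne_zero (hP m) e3)
      rw [← mul_div_assoc,
          div_sub_div _ _ hd2 hd3, div_eq_div_iff hd1 (mul_ne_zero hd2 hd3)]
      ring
    rw [Finset.prod_range_succ, ih, mul_sub, Finset.sum_mul, Finset.sum_mul]
    -- RHS target sum: peel first and last terms
    rw [Finset.sum_range_succ' (fun k => C (Aco t (n+1) k) * (X 1 : MvPolynomial (Fin 2) K) ^ (n + 1 - k) * (X 0) ^ k) (n+1)]
    rw [Finset.sum_range_succ (fun k => C (Aco t (n+1) (k+1)) * (X 1 : MvPolynomial (Fin 2) K) ^ (n + 1 - (k+1)) * (X 0) ^ (k+1)) n]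
    -- first LHS sum: peel first term
    rw [Finset.sum_range_succ' (fun k => C (Aco t n k) * (X 1 : MvPolynomial (Fin 2) K) ^ (n - k) * (X 0) ^ k * X 1) n]
    -- second LHS sum: peel last term
    rw [Finset.sum_range_succ (fun k => C (Aco t n k) * (X 1 : MvPolynomial (Fin 2) K) ^ (n - k) * (X 0) ^ k * (C ((t^2)^n) * X 0)) n]
    have mid : ∀ k ∈ Finset.range n,
        C (Aco t (n+1) (k+1)) * (X 1 : MvPolynomial (Fin 2) K) ^ (n + 1 - (k+1)) * (X 0) ^ (k+1)
          = C (Aco t n (k+1)) * (X 1) ^ (n - (k+1)) * (X 0) ^ (k+1) * X 1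
            - C (Aco t n k) * (X 1) ^ (n - k) * (X 0) ^ k * (C ((t^2)^n) * X 0) := by
      intro k hk
      rw [Finset.mem_range] at hk
      rw [hmid k hk, C_sub, C_mul]
      rw [show n + 1 - (k + 1) = (n - (k + 1)) + 1 by omega]
      rw [show n - k = (n - (k+1)) + 1 by omega]
      ring
    rw [Finset.sum_congr rfl mid, Finset.sum_sub_distrib]
    rw [h0 n, h0 (n+1), hlast]
    simp only [Nat.sub_self, Nat.sub_zero, pow_zero, C_1, one_mul, mul_one, C_neg, C_mul,
      Nat.add_sub_cancel]
    ring


/-- The q-hypergeometric identity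
`Σ_{d₁,d₂≥0} (−t)^{d₁²+2d₁d₂+2d₂²} t^{d₁} b^{d₁} a^{d₂} / ((q;q)_{d₁}(q;q)_{d₂})
  = Σ_{d≥0} (−1)^d q^{d(d+1)/2} ∏_{i=0}^{d−1}(b − a qⁱ) / (q;q)_d`
in `K[[a,b]]` (with `q = t²`): since each term on the left with `d₁ + d₂ = n` and the
`d = n` term on the right are homogeneous of total degree `n` in the variables
`a = X 0`, `b = X 1`, the two power series are equal iff for every `n` the degree-`n`
homogeneous components agree, which is the statement below. -/
theorem qHypergeometric_quiver_identity {K : Type*} [Field K] (t q : K) (ht : t ≠ 0)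
    (ht2 : ∀ d : ℕ, 1 ≤ d → t ^ (2 * d) ≠ 1) (hq : q = t ^ 2) (n : ℕ) :
    ∑ d₁ ∈ Finset.range (n + 1),
      C ((-t) ^ (d₁ ^ 2 + 2 * d₁ * (n - d₁) + 2 * (n - d₁) ^ 2) * t ^ d₁ /
          ((∏ i ∈ Finset.range d₁, (1 - q ^ (i + 1))) *
            ∏ i ∈ Finset.range (n - d₁), (1 - q ^ (i + 1)))) *
        (X 1 : MvPolynomial (Fin 2) K) ^ d₁ * (X 0) ^ (n - d₁) =
      C ((-1 : K) ^ n * q ^ (n * (n + 1) / 2) /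
          ∏ i ∈ Finset.range n, (1 - q ^ (i + 1))) *
        ∏ i ∈ Finset.range n, ((X 1 : MvPolynomial (Fin 2) K) - C (q ^ i) * X 0) := by
  subst hq
  have h1 : ∀ i : ℕ, 1 ≤ i → (1 : K) - (t ^ 2) ^ i ≠ 0 := by
    intro i hi
    refine sub_ne_zero_of_ne fun h => ht2 i hi ?_
    rw [pow_mul]; exact h.symm
  have hP : ∀ m : ℕ, Pq (t ^ 2) m ≠ 0 := fun m =>
    Finset.prod_ne_zero_iff.mpr fun i _ => h1 (i + 1) (by omega)
  have e : ∀ m : ℕ, (∏ i ∈ Finset.range m, (1 - (t ^ 2 : K) ^ (i + 1))) = Pq (t ^ 2) m :=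
    fun _ => rfl
  simp only [e]
  rw [qexpand t ht h1 hP n, Finset.mul_sum, ← Finset.sum_range_reflect]
  refine Finset.sum_congr rfl fun j hj => ?_
  rw [Finset.mem_range] at hj
  obtain ⟨d, rfl⟩ : ∃ d, n = d + j := ⟨n - j, by omega⟩
  simp only [Nat.add_sub_cancel, Nat.add_sub_cancel_left]
  rw [show C ((-1 : K) ^ (d + j) * (t ^ 2) ^ ((d + j) * (d + j + 1) / 2) / Pq (t ^ 2) (d + j)) *
        (C (Aco t (d + j) j) * (X 1 : MvPolynomial (Fin 2) K) ^ d * X 0 ^ j) =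
      C ((-1 : K) ^ (d + j) * (t ^ 2) ^ ((d + j) * (d + j + 1) / 2) / Pq (t ^ 2) (d + j) *
        Aco t (d + j) j) * (X 1) ^ d * X 0 ^ j by rw [C_mul]; ring]
  congr 2
  -- scalar identity
  unfold Aco
  simp only [Nat.add_sub_cancel, Nat.add_sub_cancel_left]
  have hq2 : ((t : K) ^ 2) ^ ((d + j) * (d + j + 1) / 2) = t ^ ((d + j) * (d + j + 1)) := by
    rw [← pow_mul, Nat.mul_div_cancel' (Nat.even_mul_succ_self (d + j)).two_dvd]
  have hsgn : ((-t : K)) ^ (d ^ 2 + 2 * d * j + 2 * j ^ 2) =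
      (-1 : K) ^ d * t ^ (d ^ 2 + 2 * d * j + 2 * j ^ 2) := by
    rw [neg_pow]
    congr 1
    rcases Nat.even_or_odd d with ⟨m, rfl⟩ | ⟨m, rfl⟩
    · rw [Even.neg_one_pow ⟨2 * m ^ 2 + 2 * m * j + j ^ 2, by ring⟩,
        Even.neg_one_pow ⟨m, rfl⟩]
    · rw [Odd.neg_one_pow ⟨2 * m ^ 2 + 2 * m + (2 * m + 1) * j + j ^ 2, by ring⟩,
        Odd.neg_one_pow ⟨m, rfl⟩]
  have key : ((-1 : K)) ^ (d + j) * (-1) ^ j = (-1) ^ d := by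
    rw [pow_add, mul_assoc, ← mul_pow]; norm_num
  rw [hsgn, hq2, ← key]
  congr 1
  field_simp [hP, ht]
  ring
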